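/- Let U ⊆ ℂ^n be open and let ψ : U → ℝ be a C² function with ψ < −1 on U and with everywhere nonnegative Levi form (L_ψ(x; v) ≥ 0 for all x ∈ U, v ∈ ℂ^n). Define η := −ψ + log(−ψ) and λ := (1 − ψ)². Then for every x ∈ U and every v ∈ ℂ^n one has −L_η(x; v) − λ(x)^{-1} |∂η(x)(v)|² ≥ L_ψ(x; v). (This is the curvature computation for the auxiliary functions η_ε and λ_ε in the paper's proof of its main extension theorem, Theorem 1.1/4.1.) -/

import Mathlib

open MeasureTheory Metric Complex Set ENNReal

noncomputable section

/-- Lebesgue measure on `ℂⁿ` (with its Euclidean metric structure). -/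
noncomputable instance (n : ℕ) : MeasureSpace (EuclideanSpace ℂ (Fin n)) :=
  ⟨Measure.map (WithLp.toLp 2) (volume : Measure (Fin n → ℂ))⟩

instance (n : ℕ) : BorelSpace (EuclideanSpace ℂ (Fin n)) :=
  inferInstance

/-- The canonical extension of a nonpositive-infinity-allowing value to `ℝ≥0∞`:
`⊤ ↦ ⊤`, `⊥ ↦ 0`, reals to `ENNReal.ofReal`. -/
def EReal.toENNReal' (x : EReal) : ℝ≥0∞ :=
  if x = ⊤ then ⊤ else ENNReal.ofReal x.toReal

/-- The integral of an `EReal`-valued function: upper part minus lower part,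
computed with Lebesgue upper integrals and `EReal` subtraction. -/
def eIntegral {α : Type*} [MeasurableSpace α] (μ : Measure α) (f : α → EReal) : EReal :=
  ((∫⁻ a, (f a).toENNReal' ∂μ : ℝ≥0∞) : EReal) - ((∫⁻ a, (-(f a)).toENNReal' ∂μ : ℝ≥0∞) : EReal)

/-- `e^x ∈ [0,∞]` for `x ∈ [-∞,∞]`. -/
def eexp (x : EReal) : ℝ≥0∞ :=
  if x = ⊤ then ⊤ else if x = ⊥ then 0 else ENNReal.ofReal (Real.exp x.toReal)

/-- A function `u : ℂⁿ → [-∞,∞)` is plurisubharmonic on an open set `U` if it is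
upper semicontinuous on `U`, takes the value `⊤` nowhere on `U`, is not identically `⊥`
on any connected component of `U`, and satisfies the sub-mean value inequality on every
sufficiently small circle in every complex direction. -/
def IsPSH {n : ℕ} (U : Set (EuclideanSpace ℂ (Fin n))) (u : EuclideanSpace ℂ (Fin n) → EReal) :
    Prop :=
  UpperSemicontinuousOn u U ∧
  (∀ x ∈ U, u x ≠ ⊤) ∧
  (∀ x ∈ U, ∃ y ∈ connectedComponentIn U x, u y ≠ ⊥) ∧
  ∀ a ∈ U, ∀ b : EuclideanSpace ℂ (Fin n), ∃ r₀ > (0:ℝ), ∀ r : ℝ, 0 < r → r < r₀ →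
    (∀ θ : ℝ, a + ((r : ℂ) * Complex.exp (θ * Complex.I)) • b ∈ U) ∧
    u a ≤ (((2 * Real.pi)⁻¹ : ℝ) : EReal) *
      eIntegral (volume.restrict (Set.Ioc (0:ℝ) (2 * Real.pi)))
        (fun θ : ℝ => u (a + ((r : ℂ) * Complex.exp (θ * Complex.I)) • b))

/-- A set `E`, closed in an open set `Ω ⊆ ℂⁿ`, is complete pluripolar in `Ω` if every point
of `E` has an open neighborhood `U ⊆ Ω` carrying a plurisubharmonic function `φ` with
`E ∩ U = φ⁻¹(-∞)`. -/
def CompletePluripolarIn {n : ℕ} (Ω E : Set (EuclideanSpace ℂ (Fin n))) : Prop :=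
  ∀ x ∈ E, ∃ U : Set (EuclideanSpace ℂ (Fin n)), IsOpen U ∧ x ∈ U ∧ U ⊆ Ω ∧
    ∃ φ : EuclideanSpace ℂ (Fin n) → EReal, IsPSH U φ ∧ E ∩ U = {y ∈ U | φ y = ⊥}

/-- A bounded pseudoconvex domain in `ℂⁿ`: a bounded nonempty connected open set on which
`z ↦ -log dist(z, ℂⁿ ∖ Ω)` is plurisubharmonic. -/
def BoundedPseudoconvexDomain {n : ℕ} (Ω : Set (EuclideanSpace ℂ (Fin n))) : Prop :=
  IsOpen Ω ∧ IsConnected Ω ∧ Bornology.IsBounded Ω ∧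
  IsPSH Ω (fun z => ((-Real.log (Metric.infDist z Ωᶜ) : ℝ) : EReal))

/-- The Levi form of a real-valued function `u` on `ℂⁿ` at `x` in direction `v`:
`(1/4)` times the Laplacian at `w = 0` of `w ↦ u (x + w v)`. -/
def Levi {n : ℕ} (u : EuclideanSpace ℂ (Fin n) → ℝ) (x v : EuclideanSpace ℂ (Fin n)) : ℝ :=
  ((fderiv ℝ (fun w : ℂ => fderiv ℝ (fun w' : ℂ => u (x + w' • v)) w) 0) 1 1 +
   (fderiv ℝ (fun w : ℂ => fderiv ℝ (fun w' : ℂ => u (x + w' • v)) w) 0) Complex.I Complex.I) / 4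

/-- The `(1,0)`-differential `∂u(x)(v) = Σⱼ (∂u/∂zⱼ)(x) vⱼ` of a real-valued function `u`
on `ℂⁿ`, computed as `∂g/∂w (0) = (1/2)(∂ₓg - i ∂_y g)(0)` for `g(w) = u(x + w v)`. -/
def del1 {n : ℕ} (u : EuclideanSpace ℂ (Fin n) → ℝ) (x v : EuclideanSpace ℂ (Fin n)) : ℂ :=
  (((fderiv ℝ (fun w : ℂ => u (x + w • v)) 0) 1 : ℝ) -
    Complex.I * ((fderiv ℝ (fun w : ℂ => u (x + w • v)) 0) Complex.I : ℝ)) / 2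

set_option maxHeartbeats 2000000 in
/-- The curvature computation for the auxiliary functions `η = -ψ + log(-ψ)` and
`λ = (1-ψ)²` in the paper's proof of Theorem 1.1/4.1: if `ψ < -1` is `C²` with nonnegative
Levi form on an open set `U ⊆ ℂⁿ`, then
`-L_η(x; v) - λ(x)⁻¹ |∂η(x)(v)|² ≥ L_ψ(x; v)` on `U`. -/
theorem eta_lambda_curvature_estimate
    {n : ℕ} (U : Set (EuclideanSpace ℂ (Fin n))) (hU : IsOpen U)
    (ψ : EuclideanSpace ℂ (Fin n) → ℝ) (hψC2 : ContDiffOn ℝ 2 ψ U)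
    (hψlt : ∀ x ∈ U, ψ x < -1)
    (hψpsh : ∀ x ∈ U, ∀ v : EuclideanSpace ℂ (Fin n), 0 ≤ Levi ψ x v)
    (η lam : EuclideanSpace ℂ (Fin n) → ℝ)
    (hη : ∀ x, η x = -ψ x + Real.log (-ψ x))
    (hlam : ∀ x, lam x = (1 - ψ x) ^ 2) :
    ∀ x ∈ U, ∀ v : EuclideanSpace ℂ (Fin n),
      Levi ψ x v ≤ -Levi η x v - (lam x)⁻¹ * ‖del1 η x v‖ ^ 2 := by
  intro x hx v
  set g : ℂ → ℝ := fun w' : ℂ => ψ (x + w' • v) with hgdef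
  set h : ℂ → ℝ := fun w' : ℂ => η (x + w' • v) with hhdef
  have hℓ : ContDiff ℝ 2 (fun w : ℂ => x + w • v) :=
    contDiff_const.add ((ContinuousLinearMap.id ℝ ℂ).smulRight v).contDiff
  set V : Set ℂ := (fun w : ℂ => x + w • v) ⁻¹' U with hVdef
  have hVopen : IsOpen V := hU.preimage hℓ.continuous
  have h0V : (0 : ℂ) ∈ V := by
    simp only [hVdef, Set.mem_preimage, zero_smul, add_zero]; exact hx
  have hgC2 : ContDiffOn ℝ 2 g V :=
    hψC2.comp hℓ.contDiffOn (fun w hw => hw)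
  have hgneg : ∀ w ∈ V, g w < -1 := fun w hw => hψlt _ hw
  have hgne : ∀ w ∈ V, g w ≠ 0 := fun w hw => by have := hgneg w hw; linarith
  set A : ℂ → (ℂ →L[ℝ] ℝ) := fun w => fderiv ℝ g w with hAdef
  have hgdiff : ∀ w ∈ V, HasFDerivAt g (A w) w := by
    intro w hw
    exact ((hgC2.contDiffAt (hVopen.mem_nhds hw)).differentiableAt
      (by norm_num)).hasFDerivAt
  set c : ℂ → ℝ := fun w => -1 + (g w)⁻¹ with hcdef
  have hh1 : ∀ w ∈ V, HasFDerivAt h ((c w) • A w) w := by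
    intro w hw
    have hF : HasDerivAt (fun t : ℝ => -t + Real.log (-t)) (c w) (g w) := by
      have h1 : HasDerivAt (fun t : ℝ => -t) (-1) (g w) := (hasDerivAt_id _).neg
      have h2 : HasDerivAt (fun t : ℝ => Real.log (-t)) ((g w)⁻¹) (g w) := by
        have hne : -g w ≠ 0 := by simpa using hgne w hw
        have h3 := (Real.hasDerivAt_log hne).comp (g w) ((hasDerivAt_id (g w)).neg)
        have h4 : HasDerivAt (fun t : ℝ => Real.log (-t)) ((-g w)⁻¹ * -1) (g w) := h3
        rw [inv_neg, neg_mul_neg, mul_one] at h4; exact h4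
      exact h1.add h2
    have := hF.comp_hasFDerivAt w (hgdiff w hw)
    have heq : h = (fun t : ℝ => -t + Real.log (-t)) ∘ g := by
      funext w'; simp [hhdef, hgdef, hη, Function.comp]
    rw [heq]; exact this
  have hhfd : ∀ w ∈ V, fderiv ℝ h w = c w • A w := fun w hw => (hh1 w hw).fderiv
  have hEv : (fun w => fderiv ℝ h w) =ᶠ[nhds (0:ℂ)] fun w => c w • A w :=
    Filter.eventually_of_mem (hVopen.mem_nhds h0V) hhfd
  have hAdiff : DifferentiableAt ℝ A 0 := by
    have h2 : ContDiffAt ℝ 2 g 0 := hgC2.contDiffAt (hVopen.mem_nhds h0V)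
    exact (h2.fderiv_right (m := 1) one_add_one_eq_two.le).differentiableAt one_ne_zero
  have hcderiv : HasFDerivAt c ((-(g 0 ^ 2)⁻¹) • A 0) 0 := by
    have hF : HasDerivAt (fun t : ℝ => -1 + t⁻¹) (-(g 0 ^ 2)⁻¹) (g 0) := by
      exact (hasDerivAt_inv (hgne 0 h0V)).const_add (-1:ℝ)
    exact hF.comp_hasFDerivAt 0 (hgdiff 0 h0V)
  have hsnd : fderiv ℝ (fun w => fderiv ℝ h w) 0 =
      c 0 • fderiv ℝ A 0 + ((-(g 0 ^ 2)⁻¹) • A 0).smulRight (A 0) := by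
    rw [hEv.fderiv_eq, fderiv_fun_smul hcderiv.differentiableAt hAdiff, hcderiv.fderiv]
  have key : ∀ e : ℂ, (fderiv ℝ (fun w => fderiv ℝ h w) 0) e e =
      c 0 * ((fderiv ℝ A 0) e e) + (-(g 0 ^ 2)⁻¹) * (A 0 e) * (A 0 e) := by
    intro e
    rw [hsnd]
    simp only [ContinuousLinearMap.add_apply, ContinuousLinearMap.smul_apply,
      ContinuousLinearMap.smulRight_apply, smul_eq_mul]
    try ring
  set s : ℝ := g 0 with hsdef
  have hs : s < -1 := hgneg 0 h0V
  have hs0 : s ≠ 0 := hgne 0 h0V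
  have hpsix : ψ x = s := by simp [hsdef, hgdef]
  set a1 : ℝ := A 0 1 with ha1
  set aI : ℝ := A 0 Complex.I with haI
  set B1 : ℝ := (fderiv ℝ A 0) 1 1 with hB1
  set BI : ℝ := (fderiv ℝ A 0) Complex.I Complex.I with hBI
  have hLψ : Levi ψ x v = (B1 + BI) / 4 := rfl
  have hLη : Levi η x v = (c 0 * B1 + (-(s ^ 2)⁻¹) * a1 * a1
      + (c 0 * BI + (-(s ^ 2)⁻¹) * aI * aI)) / 4 := by
    show ((fderiv ℝ (fun w => fderiv ℝ h w) 0) 1 1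
      + (fderiv ℝ (fun w => fderiv ℝ h w) 0) Complex.I Complex.I) / 4 = _
    rw [key 1, key Complex.I]
  have hdel1η : del1 η x v = (c 0 : ℂ) * del1 ψ x v := by
    show (((fderiv ℝ h 0) 1 : ℝ) - Complex.I * ((fderiv ℝ h 0) Complex.I : ℝ)) / 2 = _
    rw [hhfd 0 h0V]
    show ((((c 0) • A 0) 1 : ℝ) - Complex.I * (((c 0) • A 0) Complex.I : ℝ)) / 2 = _
    simp only [ContinuousLinearMap.smul_apply, smul_eq_mul]
    rw [del1]
    push_cast
    ring
  have hdelψ : ‖del1 ψ x v‖ ^ 2 = (a1 ^ 2 + aI ^ 2) / 4 := by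
    have hz : del1 ψ x v = ((a1 : ℂ) - Complex.I * (aI : ℂ)) / 2 := rfl
    rw [hz, Complex.sq_norm, Complex.normSq_apply]
    simp [Complex.div_re, Complex.div_im]
    ring
  have hnormη : ‖del1 η x v‖ ^ 2 = (c 0) ^ 2 * ((a1 ^ 2 + aI ^ 2) / 4) := by
    rw [hdel1η, norm_mul, mul_pow, Complex.norm_real, Real.norm_eq_abs,
      _root_.sq_abs, hdelψ]
  have hc0 : c 0 = -1 + s⁻¹ := rfl
  have hL : 0 ≤ (B1 + BI) / 4 := by have := hψpsh x hx v; rwa [hLψ] at this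
  have h1s : (1 : ℝ) - s ≠ 0 := by intro hcon; nlinarith [hcon]
  have hkey2 : ((1 - s) ^ 2)⁻¹ * ((-1 + s⁻¹) ^ 2) = (s ^ 2)⁻¹ := by
    field_simp
    ring
  have hinv : s⁻¹ < 0 := inv_lt_zero.mpr (by linarith)
  have hprod : 0 ≤ (-s⁻¹) * ((B1 + BI) / 4) :=
    mul_nonneg (by linarith) hL
  rw [hLψ, hLη, hnormη, hlam, hpsix, hc0]
  nlinarith [hkey2, hprod, sq_nonneg a1, sq_nonneg aI,
    mul_nonneg (mul_nonneg (inv_nonneg.mpr (sq_nonneg (1-s))) (sq_nonneg (-1+s⁻¹))) (sq_nonneg a1)]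


end
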